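/- The functions ψ_i(t) = φ_i/(cosh t − φ_n sinh t) for i = 1,...,n−1 and ψ_n(t) = (φ_n cosh t − sinh t)/(cosh t − φ_n sinh t) solve the system ψ_i' = ψ_i·ψ_n (i = 1,...,n−1), ψ_n' = −Σ_{i=1}^{n−1} ψ_i², with initial data ψ_i(0) = φ_i and Σ_{i=1}^n φ_i² = 1. -/

import Mathlib

open Real Finset

/-- The explicit functions `ψ_i(t) = φ_i/(cosh t − φ_n sinh t)` and
`ψ_n(t) = (φ_n cosh t − sinh t)/(cosh t − φ_n sinh t)` solve the geodesic
covector system for the hyperbolic space group. -/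
theorem hyperbolic_covector_solution {m : ℕ} (φ : Fin m → ℝ) (φn : ℝ)
    (hunit : (∑ i, φ i ^ 2) + φn ^ 2 = 1) (hφn : φn ^ 2 < 1)
    (ψ : Fin m → ℝ → ℝ) (ψn : ℝ → ℝ)
    (hψ : ∀ i t, ψ i t = φ i / (Real.cosh t - φn * Real.sinh t))
    (hψn : ∀ t, ψn t = (φn * Real.cosh t - Real.sinh t) / (Real.cosh t - φn * Real.sinh t)) :
    (∀ i, ψ i 0 = φ i) ∧ ψn 0 = φn ∧
    (∀ i, ∀ t : ℝ, HasDerivAt (ψ i) (ψ i t * ψn t) t) ∧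
    (∀ t : ℝ, HasDerivAt ψn (-(∑ i, ψ i t ^ 2)) t) := by
  have hD : ∀ t : ℝ, 0 < Real.cosh t - φn * Real.sinh t := by
    intro t
    nlinarith [Real.cosh_pos t, Real.cosh_sq t, sq_nonneg (Real.sinh t),
      sq_nonneg (Real.cosh t + φn * Real.sinh t), sq_nonneg (Real.cosh t - φn * Real.sinh t)]
  have hDne : ∀ t : ℝ, Real.cosh t - φn * Real.sinh t ≠ 0 := fun t => (hD t).ne'
  have hDderiv : ∀ t : ℝ, HasDerivAt (fun t => Real.cosh t - φn * Real.sinh t)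
      (Real.sinh t - φn * Real.cosh t) t := fun t =>
    (Real.hasDerivAt_cosh t).sub ((Real.hasDerivAt_sinh t).const_mul φn)
  refine ⟨?_, ?_, ?_, ?_⟩
  · intro i; simp [hψ]
  · simp [hψn]
  · intro i t
    have h : HasDerivAt (fun t => φ i / (Real.cosh t - φn * Real.sinh t)) _ t :=
      ((hasDerivAt_const t (φ i)).div (hDderiv t) (hDne t))
    have hfun : (fun t => φ i / (Real.cosh t - φn * Real.sinh t)) = ψ i := by
      funext t; rw [hψ]
    rw [hfun] at h
    convert h using 1
    rw [hψ, hψn]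
    field_simp
    ring
  · intro t
    have h : HasDerivAt (fun t => (φn * Real.cosh t - Real.sinh t) / (Real.cosh t - φn * Real.sinh t))
        (((φn * Real.sinh t - Real.cosh t) * (Real.cosh t - φn * Real.sinh t)
          - (φn * Real.cosh t - Real.sinh t) * (Real.sinh t - φn * Real.cosh t))
          / (Real.cosh t - φn * Real.sinh t) ^ 2) t :=
      (((Real.hasDerivAt_cosh t).const_mul φn).sub (Real.hasDerivAt_sinh t)).div
      (hDderiv t) (hDne t)
    have hfun : (fun t => (φn * Real.cosh t - Real.sinh t) / (Real.cosh t - φn * Real.sinh t))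
        = ψn := by funext t; rw [hψn]
    rw [hfun] at h
    convert h using 1
    have hsum : (∑ i, φ i ^ 2) = 1 - φn ^ 2 := by linarith
    have : (∑ i, ψ i t ^ 2) = (1 - φn ^ 2) / (Real.cosh t - φn * Real.sinh t) ^ 2 := by
      rw [← hsum]
      rw [Finset.sum_div]
      exact Finset.sum_congr rfl fun i _ => by rw [hψ]; rw [div_pow]
    rw [this, ← neg_div]
    congr 1
    have hc := Real.cosh_sq t
    linear_combination (1 - φn ^ 2) * hc
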